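/- For m odd, the functions F_k are invariant under the Kahan map: if ỹ is defined by the Kahan formula ỹ_j = y_j(1−ε²H²)/((1−εH+2ε u_{j−1})(1−εH+2ε u_j)), then F_k(ỹ) = F_k(y), where F_k = (∑_{ℓ=1}^{2k-1} y_ℓ)·∏_{s=k}^{(m-1)/2} (y_{2s+1}/y_{2s}). -/

import Mathlib

set_option maxHeartbeats 1600000


/-- `u_j = y_1 + ⋯ + y_j` (1-based indexing; `usum y 0 = 0`). -/
noncomputable def usum (y : ℕ → ℝ) (j : ℕ) : ℝ := ∑ l ∈ Finset.Icc 1 j, y l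

/-- `F_k = (y_1 + ⋯ + y_{2k-1}) ∏_{s=k}^{(m-1)/2} y_{2s+1}/y_{2s}` (for `m` odd). -/
noncomputable def FkN (m k : ℕ) (y : ℕ → ℝ) : ℝ :=
  (∑ l ∈ Finset.Icc 1 (2 * k - 1), y l) *
    ∏ s ∈ Finset.Icc k ((m - 1) / 2), y (2 * s + 1) / y (2 * s)

lemma kahan_aux (P r a b c : ℝ) (hb : b ≠ 0) :
    P * (a / b) * (r * (b / c)) = P * r * (a / c) := by
  rcases eq_or_ne c 0 with rfl | hc
  · simp
  · field_simp

lemma kahan_aux2 (a u d P : ℝ) (h1 : 1 - a ≠ 0) (h2 : 1 + a ≠ 0) (hd : d ≠ 0) :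
    (1 - a) * (1 + a) * u / ((1 - a) * d) * (P * (d / (1 + a))) = u * P := by
  field_simp

/-- for `m` odd, the functions `F_k` are invariant under the Kahan map
`ỹ_j = y_j (1−ε²H²)/((1−εH+2εu_{j−1})(1−εH+2εu_j))`: `F_k(ỹ) = F_k(y)`. -/
theorem kahan_preserves_Fk (m : ℕ) (hm : Odd m) (k : ℕ) (hk1 : 1 ≤ k) (hk2 : k ≤ (m + 1) / 2)
    (ε : ℝ) (y ty : ℕ → ℝ)
    (hynz : ∀ j ∈ Finset.Icc 1 m, y j ≠ 0)
    (hden : ∀ j ≤ m, 1 - ε * usum y m + 2 * ε * usum y j ≠ 0)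
    (hP : 1 + ε * usum y m ≠ 0) (hM : 1 - ε * usum y m ≠ 0)
    (hty : ∀ j, ty j = y j * (1 - ε ^ 2 * (usum y m) ^ 2) /
      ((1 - ε * usum y m + 2 * ε * usum y (j - 1)) * (1 - ε * usum y m + 2 * ε * usum y j))) :
    FkN m k ty = FkN m k y := by
  obtain ⟨M, hmM⟩ := hm
  set H := usum y m with hH
  have hCfac : (1 - ε ^ 2 * H ^ 2) = (1 - ε * H) * (1 + ε * H) := by ring
  have hCne : (1 - ε ^ 2 * H ^ 2) ≠ 0 := by rw [hCfac]; exact mul_ne_zero hM hP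
  have hu0 : usum y 0 = 0 := by simp [usum]
  have husucc : ∀ j, usum y (j + 1) = usum y j + y (j + 1) := by
    intro j; rw [usum, usum, Finset.sum_Icc_succ_top (by omega)]
  have htusucc : ∀ j, usum ty (j + 1) = usum ty j + ty (j + 1) := by
    intro j; rw [usum, usum, Finset.sum_Icc_succ_top (by omega)]
  -- telescoped sum
  have hsum : ∀ j, j ≤ m → usum ty j = (1 - ε ^ 2 * H ^ 2) * usum y j /
      ((1 - ε * H) * (1 - ε * H + 2 * ε * usum y j)) := by
    intro j hj
    induction j with
    | zero => simp [usum]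
    | succ n ih =>
      have hn : n ≤ m := by omega
      have h1 := hden n hn
      have h2 := hden (n + 1) hj
      rw [htusucc, ih hn, hty (n + 1)]
      simp only [Nat.add_sub_cancel]
      rw [husucc n] at h2 ⊢
      rw [div_add_div _ _ (mul_ne_zero hM h1) (mul_ne_zero h1 h2),
        div_eq_div_iff (mul_ne_zero (mul_ne_zero hM h1) (mul_ne_zero h1 h2)) (mul_ne_zero hM h2)]
      ring
  -- telescoped product
  have hprod : ∀ n, k - 1 ≤ n → n ≤ M →
      ∏ s ∈ Finset.Icc k n, ty (2 * s + 1) / ty (2 * s) =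
      (∏ s ∈ Finset.Icc k n, y (2 * s + 1) / y (2 * s)) *
        ((1 - ε * H + 2 * ε * usum y (2 * k - 1)) /
          (1 - ε * H + 2 * ε * usum y (2 * n + 1))) := by
    intro n hn
    induction n, hn using Nat.le_induction with
    | base =>
      intro _
      have h2k : 2 * (k - 1) + 1 = 2 * k - 1 := by omega
      rw [h2k, Finset.Icc_eq_empty (by omega), Finset.prod_empty, Finset.prod_empty,
        div_self (hden (2 * k - 1) (by omega)), one_mul]
    | succ n hn ih =>
      intro hnM
      have ihn := ih (by omega)
      have d1 := hden (2 * n + 1) (by omega)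
      have key : ty (2 * (n + 1) + 1) / ty (2 * (n + 1)) =
          y (2 * (n + 1) + 1) / y (2 * (n + 1)) *
            ((1 - ε * H + 2 * ε * usum y (2 * n + 1)) /
              (1 - ε * H + 2 * ε * usum y (2 * (n + 1) + 1))) := by
        have d2 := hden (2 * (n + 1)) (by omega)
        have d3 := hden (2 * (n + 1) + 1) (by omega)
        have y2 := hynz (2 * (n + 1)) (Finset.mem_Icc.mpr (by omega))
        have y3 := hynz (2 * (n + 1) + 1) (Finset.mem_Icc.mpr (by omega))
        rw [hty (2 * (n + 1) + 1), hty (2 * (n + 1))]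
        simp only [show 2 * (n + 1) + 1 - 1 = 2 * (n + 1) from by omega,
          show 2 * (n + 1) - 1 = 2 * n + 1 from by omega]
        rw [div_div_div_eq, div_mul_div_comm,
          div_eq_div_iff (mul_ne_zero (mul_ne_zero d2 d3) (mul_ne_zero y2 hCne)) (mul_ne_zero y2 d3)]
        ring
      rw [Finset.prod_Icc_succ_top (by omega : k ≤ n + 1),
        Finset.prod_Icc_succ_top (by omega : k ≤ n + 1), ihn, key]
      exact kahan_aux _ _ _ _ _ d1
  have hMm : (m - 1) / 2 = M := by omega
  have hS := hsum (2 * k - 1) (by omega)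
  have hPd := hprod M (by omega) le_rfl
  have hdm' : usum y (2 * M + 1) = H := by rw [hH, hmM]
  rw [hdm'] at hPd
  have hsum' : (∑ l ∈ Finset.Icc 1 (2 * k - 1), ty l) = usum ty (2 * k - 1) := rfl
  have hsum'' : (∑ l ∈ Finset.Icc 1 (2 * k - 1), y l) = usum y (2 * k - 1) := rfl
  unfold FkN
  rw [hMm, hsum', hsum'', hS, hPd]
  have dk := hden (2 * k - 1) (by omega)
  rw [show (1 - ε * H + 2 * ε * H) = 1 + ε * H from by ring] at hPd ⊢
  rw [hCfac]
  exact kahan_aux2 (ε * H) _ _ _ hM hP dk
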